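/- Let f : Δ = [a,b]×[c,d] ⊂ [0,∞)² → [0,∞) be convex on the co-ordinates and g : Δ → [0,∞) be s-convex in the second sense on the co-ordinates, with a < b, c < d, s ∈ (0,1], and f·g integrable on Δ. Then 2^{2s+1} f((a+b)/2,(c+d)/2) g((a+b)/2,(c+d)/2) ≤ (2/((b-a)(d-c))) ∫_a^b ∫_c^d f(x,y)g(x,y) dy dx + (4s+6)/((s+1)²(s+2)²)·L + (2s²+6s+6)/((s+1)²(s+2)²)·M + (2s²+8s+6)/((s+1)²(s+2)²)·N, where L = f(a,c)g(a,c)+f(b,c)g(b,c)+f(a,d)g(a,d)+f(b,d)g(b,d), M = f(a,c)g(b,c)+f(b,c)g(a,c)+f(a,d)g(b,d)+f(b,d)g(a,d)+f(a,c)g(a,d)+f(b,c)g(b,d)+f(a,d)g(a,c)+f(b,d)g(b,c), and N = f(a,c)g(b,d)+f(b,c)g(a,d)+f(a,d)g(b,c)+f(b,d)g(a,c). -/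

import Mathlib

open MeasureTheory Set intervalIntegral

lemma cont_rpow (s : ℝ) (hs : 0 < s) : Continuous fun t : ℝ => t ^ s :=
  continuous_iff_continuousAt.2 fun t => Real.continuousAt_rpow_const t s (Or.inr hs.le)

lemma base_int1 (s : ℝ) (hs : 0 < s) : ∫ t in (0:ℝ)..1, t * t ^ s = 1 / (s + 2) := by
  rw [intervalIntegral.integral_congr (g := fun t : ℝ => t ^ (s + 1))]
  · rw [integral_rpow (Or.inl (by linarith))]
    rw [Real.one_rpow, Real.zero_rpow (by linarith)]
    norm_num; ring_nf
  · intro t ht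
    rw [Set.uIcc_of_le (by norm_num : (0:ℝ) ≤ 1)] at ht
    rcases eq_or_lt_of_le ht.1 with h0 | h0
    · simp [← h0, Real.zero_rpow hs.ne', Real.zero_rpow (by linarith : s + 1 ≠ 0)]
    · show t * t ^ s = t ^ (s + 1)
      rw [Real.rpow_add_one h0.ne', mul_comm]

lemma base_int2 (s : ℝ) (hs : 0 < s) :
    ∫ t in (0:ℝ)..1, (1 - t) * t ^ s = 1 / ((s + 1) * (s + 2)) := by
  have h1 : ∀ t : ℝ, (1 - t) * t ^ s = t ^ s - t * t ^ s := fun t => by ring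
  simp_rw [h1]
  have hi1 : IntervalIntegrable (fun t : ℝ => t ^ s) volume 0 1 :=
    (cont_rpow s hs).intervalIntegrable _ _
  have hi2 : IntervalIntegrable (fun t : ℝ => t * t ^ s) volume 0 1 := by
    have : Continuous fun t : ℝ => t * t ^ s := by
      exact continuous_id.mul (cont_rpow s hs)
    exact this.intervalIntegrable _ _
  rw [intervalIntegral.integral_sub hi1 hi2]
  rw [base_int1 s hs, integral_rpow (Or.inl (by linarith))]
  rw [Real.one_rpow, Real.zero_rpow (by linarith : s + 1 ≠ 0)]
  have h2 : s + 1 ≠ 0 := by linarith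
  have h3 : s + 2 ≠ 0 := by linarith
  field_simp
  ring
lemma J1 (a b s : ℝ) (hab : a < b) (hs : 0 < s) :
    ∫ x in a..b, ((x - a) / (b - a)) * ((x - a) / (b - a)) ^ s = (b - a) / (s + 2) := by
  have hba : (0:ℝ) < b - a := by linarith
  have h := intervalIntegral.integral_comp_mul_add (a := a) (b := b)
      (f := fun t : ℝ => t * t ^ s) (inv_ne_zero hba.ne') (-(a / (b - a)))
  have harg : ∀ x : ℝ, (b - a)⁻¹ * x + -(a / (b - a)) = (x - a) / (b - a) := fun x => by
    field_simp; try ring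
  simp_rw [harg] at h
  have e1 : (a - a) / (b - a) = 0 := by rw [sub_self, zero_div]
  have e2 : (b - a) / (b - a) = 1 := div_self hba.ne'
  rw [e1, e2, inv_inv, base_int1 s hs, smul_eq_mul] at h
  rw [h]; ring

lemma J2 (a b s : ℝ) (hab : a < b) (hs : 0 < s) :
    ∫ x in a..b, ((b - x) / (b - a)) * ((x - a) / (b - a)) ^ s
      = (b - a) / ((s + 1) * (s + 2)) := by
  have hba : (0:ℝ) < b - a := by linarith
  have h := intervalIntegral.integral_comp_mul_add (a := a) (b := b)
      (f := fun t : ℝ => (1 - t) * t ^ s) (inv_ne_zero hba.ne') (-(a / (b - a)))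
  have harg : ∀ x : ℝ, (b - a)⁻¹ * x + -(a / (b - a)) = (x - a) / (b - a) := fun x => by
    field_simp; try ring
  simp_rw [harg] at h
  have harg2 : ∀ x : ℝ, 1 - (x - a) / (b - a) = (b - x) / (b - a) := fun x => by
    field_simp; try ring
  simp_rw [harg2] at h
  have e1 : (a - a) / (b - a) = 0 := by rw [sub_self, zero_div]
  have e2 : (b - a) / (b - a) = 1 := div_self hba.ne'
  rw [e1, e2, inv_inv, base_int2 s hs, smul_eq_mul] at h
  rw [h]; ring

lemma J3 (a b s : ℝ) (hab : a < b) (hs : 0 < s) :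
    ∫ x in a..b, ((b - x) / (b - a)) * ((b - x) / (b - a)) ^ s = (b - a) / (s + 2) := by
  have h := intervalIntegral.integral_comp_sub_left (a := a) (b := b)
      (fun x => ((x - a) / (b - a)) * ((x - a) / (b - a)) ^ s) (a + b)
  have harg : ∀ x : ℝ, a + b - x - a = b - x := fun x => by ring
  simp_rw [harg] at h
  have e1 : a + b - b = a := by ring
  have e2 : a + b - a = b := by ring
  rw [e1, e2] at h
  rw [h, J1 a b s hab hs]

lemma J4 (a b s : ℝ) (hab : a < b) (hs : 0 < s) :
    ∫ x in a..b, ((x - a) / (b - a)) * ((b - x) / (b - a)) ^ s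
      = (b - a) / ((s + 1) * (s + 2)) := by
  have h := intervalIntegral.integral_comp_sub_left (a := a) (b := b)
      (fun x => ((b - x) / (b - a)) * ((x - a) / (b - a)) ^ s) (a + b)
  have harg : ∀ x : ℝ, a + b - x - a = b - x := fun x => by ring
  have harg2 : ∀ x : ℝ, b - (a + b - x) = x - a := fun x => by ring
  simp_rw [harg, harg2] at h
  have e1 : a + b - b = a := by ring
  have e2 : a + b - a = b := by ring
  rw [e1, e2] at h
  rw [h, J2 a b s hab hs]
noncomputable def wA (a b x : ℝ) : ℝ := (b - x) / (b - a)
noncomputable def wB (a b x : ℝ) : ℝ := (x - a) / (b - a)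
noncomputable def Uali (a b s x : ℝ) : ℝ :=
  wA a b x * wA a b x ^ s + wB a b x * wB a b x ^ s
noncomputable def Ucro (a b s x : ℝ) : ℝ :=
  wA a b x * wB a b x ^ s + wB a b x * wA a b x ^ s

lemma cont_wA (a b : ℝ) : Continuous (wA a b) :=
  (continuous_const.sub continuous_id).div_const _
lemma cont_wB (a b : ℝ) : Continuous (wB a b) :=
  (continuous_id.sub continuous_const).div_const _

lemma cont_Uali (a b s : ℝ) (hs : 0 < s) : Continuous (Uali a b s) :=
  ((cont_wA a b).mul ((cont_rpow s hs).comp (cont_wA a b))).add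
    ((cont_wB a b).mul ((cont_rpow s hs).comp (cont_wB a b)))
lemma cont_Ucro (a b s : ℝ) (hs : 0 < s) : Continuous (Ucro a b s) :=
  ((cont_wA a b).mul ((cont_rpow s hs).comp (cont_wB a b))).add
    ((cont_wB a b).mul ((cont_rpow s hs).comp (cont_wA a b)))

lemma int_Uali (a b s : ℝ) (hab : a < b) (hs : 0 < s) :
    ∫ x in Icc a b, Uali a b s x = 2 * (b - a) / (s + 2) := by
  rw [MeasureTheory.integral_Icc_eq_integral_Ioc, ← intervalIntegral.integral_of_le hab.le]
  unfold Uali wA wB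
  have h1 : IntervalIntegrable (fun x => (b - x) / (b - a) * ((b - x) / (b - a)) ^ s)
      volume a b :=
    (((cont_wA a b).mul ((cont_rpow s hs).comp (cont_wA a b))).intervalIntegrable _ _)
  have h2 : IntervalIntegrable (fun x => (x - a) / (b - a) * ((x - a) / (b - a)) ^ s)
      volume a b :=
    (((cont_wB a b).mul ((cont_rpow s hs).comp (cont_wB a b))).intervalIntegrable _ _)
  rw [intervalIntegral.integral_add h1 h2, J3 a b s hab hs, J1 a b s hab hs]
  ring

lemma int_Ucro (a b s : ℝ) (hab : a < b) (hs : 0 < s) :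
    ∫ x in Icc a b, Ucro a b s x = 2 * (b - a) / ((s + 1) * (s + 2)) := by
  rw [MeasureTheory.integral_Icc_eq_integral_Ioc, ← intervalIntegral.integral_of_le hab.le]
  unfold Ucro wA wB
  have h1 : IntervalIntegrable (fun x => (b - x) / (b - a) * ((x - a) / (b - a)) ^ s)
      volume a b :=
    (((cont_wA a b).mul ((cont_rpow s hs).comp (cont_wB a b))).intervalIntegrable _ _)
  have h2 : IntervalIntegrable (fun x => (x - a) / (b - a) * ((b - x) / (b - a)) ^ s)
      volume a b :=
    (((cont_wB a b).mul ((cont_rpow s hs).comp (cont_wA a b))).intervalIntegrable _ _)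
  rw [intervalIntegral.integral_add h1 h2, J2 a b s hab hs, J4 a b s hab hs]
  ring

lemma refl_x (u : ℝ) (F : ℝ × ℝ → ℝ) (S : Set (ℝ × ℝ))
    (hpre : (fun p : ℝ × ℝ => (u - p.1, p.2)) ⁻¹' S = S)
    (hF : IntegrableOn F S) :
    IntegrableOn (fun p : ℝ × ℝ => F (u - p.1, p.2)) S ∧
      ∫ p in S, F (u - p.1, p.2) = ∫ p in S, F p := by
  have hco : ⇑((MeasurableEquiv.subLeft u).prodCongr (MeasurableEquiv.refl ℝ))
      = fun p : ℝ × ℝ => (u - p.1, p.2) := rfl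
  have hmp : MeasurePreserving
      (fun p : ℝ × ℝ => (u - p.1, p.2)) (volume : Measure (ℝ × ℝ)) volume := by
    rw [Measure.volume_eq_prod]
    exact (Measure.measurePreserving_sub_left volume u).prod (MeasurePreserving.id volume)
  have hemb : MeasurableEmbedding (fun p : ℝ × ℝ => (u - p.1, p.2)) := by
    rw [← hco]
    exact ((MeasurableEquiv.subLeft u).prodCongr (MeasurableEquiv.refl ℝ)).measurableEmbedding
  constructor
  · rw [← hpre]
    exact (hmp.integrableOn_comp_preimage hemb).mpr hF
  · have h := hmp.setIntegral_preimage_emb hemb F S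
    rw [hpre] at h
    exact h

lemma refl_y (v : ℝ) (F : ℝ × ℝ → ℝ) (S : Set (ℝ × ℝ))
    (hpre : (fun p : ℝ × ℝ => (p.1, v - p.2)) ⁻¹' S = S)
    (hF : IntegrableOn F S) :
    IntegrableOn (fun p : ℝ × ℝ => F (p.1, v - p.2)) S ∧
      ∫ p in S, F (p.1, v - p.2) = ∫ p in S, F p := by
  have hco : ⇑((MeasurableEquiv.refl ℝ).prodCongr (MeasurableEquiv.subLeft v))
      = fun p : ℝ × ℝ => (p.1, v - p.2) := rfl
  have hmp : MeasurePreserving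
      (fun p : ℝ × ℝ => (p.1, v - p.2)) (volume : Measure (ℝ × ℝ)) volume := by
    rw [Measure.volume_eq_prod]
    exact (MeasurePreserving.id volume).prod (Measure.measurePreserving_sub_left volume v)
  have hemb : MeasurableEmbedding (fun p : ℝ × ℝ => (p.1, v - p.2)) := by
    rw [← hco]
    exact ((MeasurableEquiv.refl ℝ).prodCongr (MeasurableEquiv.subLeft v)).measurableEmbedding
  constructor
  · rw [← hpre]
    exact (hmp.integrableOn_comp_preimage hemb).mpr hF
  · have h := hmp.setIntegral_preimage_emb hemb F S
    rw [hpre] at h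
    exact h

lemma pre_x (a b u v : ℝ) :
    (fun p : ℝ × ℝ => (a + b - p.1, p.2)) ⁻¹' (Icc a b ×ˢ Icc u v)
      = Icc a b ×ˢ Icc u v := by
  ext p
  simp only [Set.mem_preimage, Set.mem_prod, Set.mem_Icc]
  constructor
  · rintro ⟨⟨h1, h2⟩, h3⟩; exact ⟨⟨by linarith, by linarith⟩, h3⟩
  · rintro ⟨⟨h1, h2⟩, h3⟩; exact ⟨⟨by linarith, by linarith⟩, h3⟩

lemma pre_y (a b u v : ℝ) :
    (fun p : ℝ × ℝ => (p.1, u + v - p.2)) ⁻¹' (Icc a b ×ˢ Icc u v)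
      = Icc a b ×ˢ Icc u v := by
  ext p
  simp only [Set.mem_preimage, Set.mem_prod, Set.mem_Icc]
  constructor
  · rintro ⟨h3, h1, h2⟩; exact ⟨h3, by linarith, by linarith⟩
  · rintro ⟨h3, h1, h2⟩; exact ⟨h3, by linarith, by linarith⟩
lemma wA_nonneg {a b x : ℝ} (hab : a < b) (hx : x ∈ Icc a b) : 0 ≤ wA a b x :=
  div_nonneg (by linarith [hx.2]) (by linarith)
lemma wB_nonneg {a b x : ℝ} (hab : a < b) (hx : x ∈ Icc a b) : 0 ≤ wB a b x :=
  div_nonneg (by linarith [hx.1]) (by linarith)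
lemma wA_add_wB {a b : ℝ} (hab : a < b) (x : ℝ) : wA a b x + wB a b x = 1 := by
  unfold wA wB
  rw [← add_div]
  rw [show b - x + (x - a) = b - a from by ring]
  exact div_self (by linarith)
lemma wA_mem01 {a b x : ℝ} (hab : a < b) (hx : x ∈ Icc a b) : wA a b x ∈ Icc (0:ℝ) 1 := by
  refine ⟨wA_nonneg hab hx, ?_⟩
  have := wB_nonneg hab hx
  have := wA_add_wB hab (x := x)
  linarith
lemma wsum {a b : ℝ} (hab : a < b) (x : ℝ) : wA a b x * a + wB a b x * b = x := by
  have h : b - a ≠ 0 := by linarith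
  unfold wA wB
  field_simp
  ring
lemma wA_reflect {a b : ℝ} (x : ℝ) : wA a b (a + b - x) = wB a b x := by
  unfold wA wB
  rw [show b - (a + b - x) = x - a from by ring]
lemma wB_reflect {a b : ℝ} (x : ℝ) : wB a b (a + b - x) = wA a b x := by
  unfold wA wB
  rw [show a + b - x - a = b - x from by ring]
lemma mem_reflect {a b x : ℝ} (hx : x ∈ Icc a b) : a + b - x ∈ Icc a b :=
  ⟨by linarith [hx.2], by linarith [hx.1]⟩
lemma mem_mid {a b : ℝ} (hab : a < b) : (a + b) / 2 ∈ Icc a b :=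
  ⟨by linarith, by linarith⟩

lemma f_corner {a b c d : ℝ} (hab : a < b) (hcd : c < d) {f : ℝ → ℝ → ℝ}
    (hfx : ∀ y ∈ Icc c d, ConvexOn ℝ (Icc a b) fun x => f x y)
    (hfy : ∀ x ∈ Icc a b, ConvexOn ℝ (Icc c d) fun y => f x y)
    {x y : ℝ} (hx : x ∈ Icc a b) (hy : y ∈ Icc c d) :
    f x y ≤ wA a b x * wA c d y * f a c + wA a b x * wB c d y * f a d
      + wB a b x * wA c d y * f b c + wB a b x * wB c d y * f b d := by
  have hwa := wA_nonneg hab hx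
  have hwb := wB_nonneg hab hx
  have h1 : f x y ≤ wA a b x * f a y + wB a b x * f b y := by
    have h := (hfx y hy).2 (Set.left_mem_Icc.mpr hab.le) (Set.right_mem_Icc.mpr hab.le)
      hwa hwb (wA_add_wB hab x)
    simp only [smul_eq_mul] at h
    rwa [wsum hab x] at h
  have h2 : f a y ≤ wA c d y * f a c + wB c d y * f a d := by
    have h := (hfy a (Set.left_mem_Icc.mpr hab.le)).2 (Set.left_mem_Icc.mpr hcd.le)
      (Set.right_mem_Icc.mpr hcd.le) (wA_nonneg hcd hy) (wB_nonneg hcd hy)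
      (wA_add_wB hcd y)
    simp only [smul_eq_mul] at h
    rwa [wsum hcd y] at h
  have h3 : f b y ≤ wA c d y * f b c + wB c d y * f b d := by
    have h := (hfy b (Set.right_mem_Icc.mpr hab.le)).2 (Set.left_mem_Icc.mpr hcd.le)
      (Set.right_mem_Icc.mpr hcd.le) (wA_nonneg hcd hy) (wB_nonneg hcd hy)
      (wA_add_wB hcd y)
    simp only [smul_eq_mul] at h
    rwa [wsum hcd y] at h
  nlinarith [mul_le_mul_of_nonneg_left h2 hwa, mul_le_mul_of_nonneg_left h3 hwb]

lemma g_corner {a b c d s : ℝ} (hab : a < b) (hcd : c < d) {g : ℝ → ℝ → ℝ}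
    (hgx : ∀ y ∈ Icc c d, ∀ u ∈ Icc a b, ∀ v ∈ Icc a b, ∀ l ∈ Icc (0:ℝ) 1,
      g (l * u + (1 - l) * v) y ≤ l ^ s * g u y + (1 - l) ^ s * g v y)
    (hgy : ∀ x ∈ Icc a b, ∀ u ∈ Icc c d, ∀ v ∈ Icc c d, ∀ l ∈ Icc (0:ℝ) 1,
      g x (l * u + (1 - l) * v) ≤ l ^ s * g x u + (1 - l) ^ s * g x v)
    {x y : ℝ} (hx : x ∈ Icc a b) (hy : y ∈ Icc c d) :
    g x y ≤ wA a b x ^ s * wA c d y ^ s * g a c + wA a b x ^ s * wB c d y ^ s * g a d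
      + wB a b x ^ s * wA c d y ^ s * g b c + wB a b x ^ s * wB c d y ^ s * g b d := by
  have hone : (1 : ℝ) - wA a b x = wB a b x := by
    have := wA_add_wB hab (x := x); linarith
  have h1 : g x y ≤ wA a b x ^ s * g a y + wB a b x ^ s * g b y := by
    have h := hgx y hy a (Set.left_mem_Icc.mpr hab.le) b (Set.right_mem_Icc.mpr hab.le)
      (wA a b x) (wA_mem01 hab hx)
    rw [hone] at h
    rwa [wsum hab x] at h
  have honey : (1 : ℝ) - wA c d y = wB c d y := by
    have := wA_add_wB hcd (x := y); linarith
  have h2 : g a y ≤ wA c d y ^ s * g a c + wB c d y ^ s * g a d := by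
    have h := hgy a (Set.left_mem_Icc.mpr hab.le) c (Set.left_mem_Icc.mpr hcd.le) d
      (Set.right_mem_Icc.mpr hcd.le) (wA c d y) (wA_mem01 hcd hy)
    rw [honey] at h
    rwa [wsum hcd y] at h
  have h3 : g b y ≤ wA c d y ^ s * g b c + wB c d y ^ s * g b d := by
    have h := hgy b (Set.right_mem_Icc.mpr hab.le) c (Set.left_mem_Icc.mpr hcd.le) d
      (Set.right_mem_Icc.mpr hcd.le) (wA c d y) (wA_mem01 hcd hy)
    rw [honey] at h
    rwa [wsum hcd y] at h
  have hpa : 0 ≤ wA a b x ^ s := Real.rpow_nonneg (wA_nonneg hab hx) s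
  have hpb : 0 ≤ wB a b x ^ s := Real.rpow_nonneg (wB_nonneg hab hx) s
  nlinarith [mul_le_mul_of_nonneg_left h2 hpa, mul_le_mul_of_nonneg_left h3 hpb]
lemma pointwise_core (a b c d s : ℝ) (hab : a < b) (hcd : c < d) (hs : 0 < s)
    (f g : ℝ → ℝ → ℝ)
    (hf0 : ∀ x ∈ Icc a b, ∀ y ∈ Icc c d, 0 ≤ f x y)
    (hg0 : ∀ x ∈ Icc a b, ∀ y ∈ Icc c d, 0 ≤ g x y)
    (hfx : ∀ y ∈ Icc c d, ConvexOn ℝ (Icc a b) fun x => f x y)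
    (hfy : ∀ x ∈ Icc a b, ConvexOn ℝ (Icc c d) fun y => f x y)
    (hgx : ∀ y ∈ Icc c d, ∀ u ∈ Icc a b, ∀ v ∈ Icc a b, ∀ l ∈ Icc (0:ℝ) 1,
      g (l * u + (1 - l) * v) y ≤ l ^ s * g u y + (1 - l) ^ s * g v y)
    (hgy : ∀ x ∈ Icc a b, ∀ u ∈ Icc c d, ∀ v ∈ Icc c d, ∀ l ∈ Icc (0:ℝ) 1,
      g x (l * u + (1 - l) * v) ≤ l ^ s * g x u + (1 - l) ^ s * g x v)
    (x y : ℝ) (hx : x ∈ Icc a b) (hy : y ∈ Icc c d) :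
    2 ^ (2*s+2) * (f ((a+b)/2) ((c+d)/2) * g ((a+b)/2) ((c+d)/2)) ≤
      (f x y * g x y + f x (c+d-y) * g x (c+d-y) + f (a+b-x) y * g (a+b-x) y
        + f (a+b-x) (c+d-y) * g (a+b-x) (c+d-y))
      + (((f a c + f a d + f b c + f b d) * (g a c + g a d + g b c + g b d)
            - (f a c * g a c + f a d * g a d + f b c * g b c + f b d * g b d))
          * (Uali a b s x * Uali c d s y)
        + ((f a c + f a d + f b c + f b d) * (g a c + g a d + g b c + g b d)
            - (f a c * g a d + f a d * g a c + f b c * g b d + f b d * g b c))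
          * (Uali a b s x * Ucro c d s y)
        + ((f a c + f a d + f b c + f b d) * (g a c + g a d + g b c + g b d)
            - (f a c * g b c + f a d * g b d + f b c * g a c + f b d * g a d))
          * (Ucro a b s x * Uali c d s y)
        + ((f a c + f a d + f b c + f b d) * (g a c + g a d + g b c + g b d)
            - (f a c * g b d + f a d * g b c + f b c * g a d + f b d * g a c))
          * (Ucro a b s x * Ucro c d s y)) := by
  have hx' : a + b - x ∈ Icc a b := mem_reflect hx
  have hy' : c + d - y ∈ Icc c d := mem_reflect hy
  have hm1 : (a + b) / 2 ∈ Icc a b := mem_mid hab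
  have hm2 : (c + d) / 2 ∈ Icc c d := mem_mid hcd
  have half0 : (0:ℝ) ≤ 1/2 := by norm_num
  have halfsum : (1/2 : ℝ) + 1/2 = 1 := by norm_num
  -- f midpoint bounds
  have hfm : f ((a+b)/2) ((c+d)/2) ≤ 1/2 * f x ((c+d)/2) + 1/2 * f (a+b-x) ((c+d)/2) := by
    have h := (hfx ((c+d)/2) hm2).2 hx hx' half0 half0 halfsum
    simp only [smul_eq_mul] at h
    rwa [show (1/2:ℝ)*x + 1/2*(a+b-x) = (a+b)/2 from by ring] at h
  have hf1 : f x ((c+d)/2) ≤ 1/2 * f x y + 1/2 * f x (c+d-y) := by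
    have h := (hfy x hx).2 hy hy' half0 half0 halfsum
    simp only [smul_eq_mul] at h
    rwa [show (1/2:ℝ)*y + 1/2*(c+d-y) = (c+d)/2 from by ring] at h
  have hf2 : f (a+b-x) ((c+d)/2) ≤ 1/2 * f (a+b-x) y + 1/2 * f (a+b-x) (c+d-y) := by
    have h := (hfy (a+b-x) hx').2 hy hy' half0 half0 halfsum
    simp only [smul_eq_mul] at h
    rwa [show (1/2:ℝ)*y + 1/2*(c+d-y) = (c+d)/2 from by ring] at h
  -- g midpoint bounds
  have hmem01 : (1/2 : ℝ) ∈ Icc (0:ℝ) 1 := by constructor <;> norm_num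
  have hgm : g ((a+b)/2) ((c+d)/2)
      ≤ (1/2)^s * g x ((c+d)/2) + (1/2)^s * g (a+b-x) ((c+d)/2) := by
    have h := hgx ((c+d)/2) hm2 x hx (a+b-x) hx' (1/2) hmem01
    rw [show (1:ℝ) - 1/2 = 1/2 from by norm_num] at h
    rwa [show (1/2:ℝ)*x + 1/2*(a+b-x) = (a+b)/2 from by ring] at h
  have hg1 : g x ((c+d)/2) ≤ (1/2)^s * g x y + (1/2)^s * g x (c+d-y) := by
    have h := hgy x hx y hy (c+d-y) hy' (1/2) hmem01
    rw [show (1:ℝ) - 1/2 = 1/2 from by norm_num] at h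
    rwa [show (1/2:ℝ)*y + 1/2*(c+d-y) = (c+d)/2 from by ring] at h
  have hg2 : g (a+b-x) ((c+d)/2) ≤ (1/2)^s * g (a+b-x) y + (1/2)^s * g (a+b-x) (c+d-y) := by
    have h := hgy (a+b-x) hx' y hy (c+d-y) hy' (1/2) hmem01
    rw [show (1:ℝ) - 1/2 = 1/2 from by norm_num] at h
    rwa [show (1/2:ℝ)*y + 1/2*(c+d-y) = (c+d)/2 from by ring] at h
  have hq0 : (0:ℝ) ≤ (1/2:ℝ)^s := Real.rpow_nonneg (by norm_num) s
  -- totals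
  have hftot : f ((a+b)/2) ((c+d)/2)
      ≤ 1/4 * (f x y + f x (c+d-y) + f (a+b-x) y + f (a+b-x) (c+d-y)) := by
    linarith [mul_le_mul_of_nonneg_left hf1 half0, mul_le_mul_of_nonneg_left hf2 half0]
  have hgtot : g ((a+b)/2) ((c+d)/2)
      ≤ (1/2)^s * (1/2)^s * (g x y + g x (c+d-y) + g (a+b-x) y + g (a+b-x) (c+d-y)) := by
    nlinarith [mul_le_mul_of_nonneg_left hg1 hq0, mul_le_mul_of_nonneg_left hg2 hq0]
  -- nonnegativity
  have hfv1 := hf0 x hx y hy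
  have hfv2 := hf0 x hx (c+d-y) hy'
  have hfv3 := hf0 (a+b-x) hx' y hy
  have hfv4 := hf0 (a+b-x) hx' (c+d-y) hy'
  have hgv1 := hg0 x hx y hy
  have hgv2 := hg0 x hx (c+d-y) hy'
  have hgv3 := hg0 (a+b-x) hx' y hy
  have hgv4 := hg0 (a+b-x) hx' (c+d-y) hy'
  have hgm0 : 0 ≤ g ((a+b)/2) ((c+d)/2) := hg0 _ hm1 _ hm2
  have hprod : f ((a+b)/2) ((c+d)/2) * g ((a+b)/2) ((c+d)/2)
      ≤ (1/4 * (f x y + f x (c+d-y) + f (a+b-x) y + f (a+b-x) (c+d-y)))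
        * ((1/2)^s * (1/2)^s * (g x y + g x (c+d-y) + g (a+b-x) y + g (a+b-x) (c+d-y))) :=
    mul_le_mul hftot hgtot hgm0 (by linarith)
  have hP0 : (0:ℝ) ≤ (2:ℝ)^(2*s+2) := Real.rpow_nonneg (by norm_num) _
  have hmain := mul_le_mul_of_nonneg_left hprod hP0
  have hhalf : (1/2:ℝ)^s = ((2:ℝ)^s)⁻¹ := by
    rw [show (1/2:ℝ) = 2⁻¹ from by norm_num, Real.inv_rpow (by norm_num : (0:ℝ) ≤ 2)]
  have h22 : (2:ℝ)^(2:ℝ) = 4 := by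
    rw [show (2:ℝ) = ((2:ℕ):ℝ) from by norm_num, Real.rpow_natCast]
    norm_num
  have h2s2 : (2:ℝ)^(2*s+2) = (2:ℝ)^s * (2:ℝ)^s * 4 := by
    rw [show (2*s+2:ℝ) = s + (s + 2) from by ring,
      Real.rpow_add (by norm_num : (0:ℝ) < 2),
      Real.rpow_add (by norm_num : (0:ℝ) < 2), h22]
    ring
  have h2s0 : ((2:ℝ)^s) ≠ 0 := (Real.rpow_pos_of_pos (by norm_num) s).ne'
  have hEq : (2:ℝ)^(2*s+2) * ((1/4 * (f x y + f x (c+d-y) + f (a+b-x) y + f (a+b-x) (c+d-y)))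
        * ((1/2)^s * (1/2)^s * (g x y + g x (c+d-y) + g (a+b-x) y + g (a+b-x) (c+d-y))))
      = (f x y + f x (c+d-y) + f (a+b-x) y + f (a+b-x) (c+d-y))
        * (g x y + g x (c+d-y) + g (a+b-x) y + g (a+b-x) (c+d-y)) := by
    rw [hhalf, h2s2]
    field_simp
  -- corner bounds at the four points
  have bf1 := f_corner hab hcd hfx hfy hx hy
  have bf2 := f_corner hab hcd hfx hfy hx hy'
  have bf3 := f_corner hab hcd hfx hfy hx' hy
  have bf4 := f_corner hab hcd hfx hfy hx' hy'
  have bg1 := g_corner hab hcd hgx hgy hx hy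
  have bg2 := g_corner hab hcd hgx hgy hx hy'
  have bg3 := g_corner hab hcd hgx hgy hx' hy
  have bg4 := g_corner hab hcd hgx hgy hx' hy'
  simp only [wA_reflect, wB_reflect] at bf2 bf3 bf4 bg2 bg3 bg4
  -- weight nonnegativity
  have hw1 := wA_nonneg hab hx
  have hw2 := wB_nonneg hab hx
  have hw3 := wA_nonneg hcd hy
  have hw4 := wB_nonneg hcd hy
  have hr1 : 0 ≤ wA a b x ^ s := Real.rpow_nonneg hw1 s
  have hr2 : 0 ≤ wB a b x ^ s := Real.rpow_nonneg hw2 s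
  have hr3 : 0 ≤ wA c d y ^ s := Real.rpow_nonneg hw3 s
  have hr4 : 0 ≤ wB c d y ^ s := Real.rpow_nonneg hw4 s
  have hia : a ∈ Icc a b := Set.left_mem_Icc.mpr hab.le
  have hib : b ∈ Icc a b := Set.right_mem_Icc.mpr hab.le
  have hic : c ∈ Icc c d := Set.left_mem_Icc.mpr hcd.le
  have hid : d ∈ Icc c d := Set.right_mem_Icc.mpr hcd.le
  have hfac := hf0 a hia c hic
  have hfad := hf0 a hia d hid
  have hfbc := hf0 b hib c hic
  have hfbd := hf0 b hib d hid
  -- nonnegativity of the four f corner bounds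
  have hBf1 : 0 ≤ wA a b x * wA c d y * f a c + wA a b x * wB c d y * f a d
      + wB a b x * wA c d y * f b c + wB a b x * wB c d y * f b d := by
    have t1 := mul_nonneg (mul_nonneg hw1 hw3) hfac
    have t2 := mul_nonneg (mul_nonneg hw1 hw4) hfad
    have t3 := mul_nonneg (mul_nonneg hw2 hw3) hfbc
    have t4 := mul_nonneg (mul_nonneg hw2 hw4) hfbd
    linarith
  have hBf2 : 0 ≤ wA a b x * wB c d y * f a c + wA a b x * wA c d y * f a d
      + wB a b x * wB c d y * f b c + wB a b x * wA c d y * f b d := by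
    have t1 := mul_nonneg (mul_nonneg hw1 hw4) hfac
    have t2 := mul_nonneg (mul_nonneg hw1 hw3) hfad
    have t3 := mul_nonneg (mul_nonneg hw2 hw4) hfbc
    have t4 := mul_nonneg (mul_nonneg hw2 hw3) hfbd
    linarith
  have hBf3 : 0 ≤ wB a b x * wA c d y * f a c + wB a b x * wB c d y * f a d
      + wA a b x * wA c d y * f b c + wA a b x * wB c d y * f b d := by
    have t1 := mul_nonneg (mul_nonneg hw2 hw3) hfac
    have t2 := mul_nonneg (mul_nonneg hw2 hw4) hfad
    have t3 := mul_nonneg (mul_nonneg hw1 hw3) hfbc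
    have t4 := mul_nonneg (mul_nonneg hw1 hw4) hfbd
    linarith
  have hBf4 : 0 ≤ wB a b x * wB c d y * f a c + wB a b x * wA c d y * f a d
      + wA a b x * wB c d y * f b c + wA a b x * wA c d y * f b d := by
    have t1 := mul_nonneg (mul_nonneg hw2 hw4) hfac
    have t2 := mul_nonneg (mul_nonneg hw2 hw3) hfad
    have t3 := mul_nonneg (mul_nonneg hw1 hw4) hfbc
    have t4 := mul_nonneg (mul_nonneg hw1 hw3) hfbd
    linarith
  -- the 12 off-diagonal product bounds
  have p12 := mul_le_mul bf1 bg2 hgv2 hBf1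
  have p13 := mul_le_mul bf1 bg3 hgv3 hBf1
  have p14 := mul_le_mul bf1 bg4 hgv4 hBf1
  have p21 := mul_le_mul bf2 bg1 hgv1 hBf2
  have p23 := mul_le_mul bf2 bg3 hgv3 hBf2
  have p24 := mul_le_mul bf2 bg4 hgv4 hBf2
  have p31 := mul_le_mul bf3 bg1 hgv1 hBf3
  have p32 := mul_le_mul bf3 bg2 hgv2 hBf3
  have p34 := mul_le_mul bf3 bg4 hgv4 hBf3
  have p41 := mul_le_mul bf4 bg1 hgv1 hBf4
  have p42 := mul_le_mul bf4 bg2 hgv2 hBf4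
  have p43 := mul_le_mul bf4 bg3 hgv3 hBf4
  -- diagonal product bounds stay as is; expansion identity
  have hexpand : (f x y + f x (c+d-y) + f (a+b-x) y + f (a+b-x) (c+d-y))
        * (g x y + g x (c+d-y) + g (a+b-x) y + g (a+b-x) (c+d-y))
      = (f x y * g x y + f x (c+d-y) * g x (c+d-y) + f (a+b-x) y * g (a+b-x) y
          + f (a+b-x) (c+d-y) * g (a+b-x) (c+d-y))
        + (f x y * g x (c+d-y) + f x y * g (a+b-x) y + f x y * g (a+b-x) (c+d-y)
          + f x (c+d-y) * g x y + f x (c+d-y) * g (a+b-x) y + f x (c+d-y) * g (a+b-x) (c+d-y)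
          + f (a+b-x) y * g x y + f (a+b-x) y * g x (c+d-y) + f (a+b-x) y * g (a+b-x) (c+d-y)
          + f (a+b-x) (c+d-y) * g x y + f (a+b-x) (c+d-y) * g x (c+d-y)
          + f (a+b-x) (c+d-y) * g (a+b-x) y) := by ring
  -- identify the sum of the twelve bound products with the U-expression
  have hfinal :
      (wA a b x * wA c d y * f a c + wA a b x * wB c d y * f a d
          + wB a b x * wA c d y * f b c + wB a b x * wB c d y * f b d)
        * ((wA a b x ^ s * wB c d y ^ s * g a c + wA a b x ^ s * wA c d y ^ s * g a d
            + wB a b x ^ s * wB c d y ^ s * g b c + wB a b x ^ s * wA c d y ^ s * g b d)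
          + (wB a b x ^ s * wA c d y ^ s * g a c + wB a b x ^ s * wB c d y ^ s * g a d
            + wA a b x ^ s * wA c d y ^ s * g b c + wA a b x ^ s * wB c d y ^ s * g b d)
          + (wB a b x ^ s * wB c d y ^ s * g a c + wB a b x ^ s * wA c d y ^ s * g a d
            + wA a b x ^ s * wB c d y ^ s * g b c + wA a b x ^ s * wA c d y ^ s * g b d))
      + (wA a b x * wB c d y * f a c + wA a b x * wA c d y * f a d
          + wB a b x * wB c d y * f b c + wB a b x * wA c d y * f b d)
        * ((wA a b x ^ s * wA c d y ^ s * g a c + wA a b x ^ s * wB c d y ^ s * g a d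
            + wB a b x ^ s * wA c d y ^ s * g b c + wB a b x ^ s * wB c d y ^ s * g b d)
          + (wB a b x ^ s * wA c d y ^ s * g a c + wB a b x ^ s * wB c d y ^ s * g a d
            + wA a b x ^ s * wA c d y ^ s * g b c + wA a b x ^ s * wB c d y ^ s * g b d)
          + (wB a b x ^ s * wB c d y ^ s * g a c + wB a b x ^ s * wA c d y ^ s * g a d
            + wA a b x ^ s * wB c d y ^ s * g b c + wA a b x ^ s * wA c d y ^ s * g b d))
      + (wB a b x * wA c d y * f a c + wB a b x * wB c d y * f a d
          + wA a b x * wA c d y * f b c + wA a b x * wB c d y * f b d)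
        * ((wA a b x ^ s * wA c d y ^ s * g a c + wA a b x ^ s * wB c d y ^ s * g a d
            + wB a b x ^ s * wA c d y ^ s * g b c + wB a b x ^ s * wB c d y ^ s * g b d)
          + (wA a b x ^ s * wB c d y ^ s * g a c + wA a b x ^ s * wA c d y ^ s * g a d
            + wB a b x ^ s * wB c d y ^ s * g b c + wB a b x ^ s * wA c d y ^ s * g b d)
          + (wB a b x ^ s * wB c d y ^ s * g a c + wB a b x ^ s * wA c d y ^ s * g a d
            + wA a b x ^ s * wB c d y ^ s * g b c + wA a b x ^ s * wA c d y ^ s * g b d))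
      + (wB a b x * wB c d y * f a c + wB a b x * wA c d y * f a d
          + wA a b x * wB c d y * f b c + wA a b x * wA c d y * f b d)
        * ((wA a b x ^ s * wA c d y ^ s * g a c + wA a b x ^ s * wB c d y ^ s * g a d
            + wB a b x ^ s * wA c d y ^ s * g b c + wB a b x ^ s * wB c d y ^ s * g b d)
          + (wA a b x ^ s * wB c d y ^ s * g a c + wA a b x ^ s * wA c d y ^ s * g a d
            + wB a b x ^ s * wB c d y ^ s * g b c + wB a b x ^ s * wA c d y ^ s * g b d)
          + (wB a b x ^ s * wA c d y ^ s * g a c + wB a b x ^ s * wB c d y ^ s * g a d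
            + wA a b x ^ s * wA c d y ^ s * g b c + wA a b x ^ s * wB c d y ^ s * g b d))
      = ((f a c + f a d + f b c + f b d) * (g a c + g a d + g b c + g b d)
            - (f a c * g a c + f a d * g a d + f b c * g b c + f b d * g b d))
          * (Uali a b s x * Uali c d s y)
        + ((f a c + f a d + f b c + f b d) * (g a c + g a d + g b c + g b d)
            - (f a c * g a d + f a d * g a c + f b c * g b d + f b d * g b c))
          * (Uali a b s x * Ucro c d s y)
        + ((f a c + f a d + f b c + f b d) * (g a c + g a d + g b c + g b d)
            - (f a c * g b c + f a d * g b d + f b c * g a c + f b d * g a d))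
          * (Ucro a b s x * Uali c d s y)
        + ((f a c + f a d + f b c + f b d) * (g a c + g a d + g b c + g b d)
            - (f a c * g b d + f a d * g b c + f b c * g a d + f b d * g a c))
          * (Ucro a b s x * Ucro c d s y) := by
    unfold Uali Ucro
    ring
  linarith [hmain, hEq, hexpand, p12, p13, p14, p21, p23, p24, p31, p32, p34, p41, p42, p43,
    hfinal]
set_option maxHeartbeats 1000000 in
theorem product_hadamard_coordinates_midpoint_sconvex
    (a b c d s : ℝ) (ha : 0 ≤ a) (hc : 0 ≤ c) (hab : a < b) (hcd : c < d)
    (hs : s ∈ Set.Ioc (0:ℝ) 1) (f g : ℝ → ℝ → ℝ)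
    (hf0 : ∀ x ∈ Set.Icc a b, ∀ y ∈ Set.Icc c d, 0 ≤ f x y)
    (hg0 : ∀ x ∈ Set.Icc a b, ∀ y ∈ Set.Icc c d, 0 ≤ g x y)
    (hfx : ∀ y ∈ Set.Icc c d, ConvexOn ℝ (Set.Icc a b) (fun x => f x y))
    (hfy : ∀ x ∈ Set.Icc a b, ConvexOn ℝ (Set.Icc c d) (fun y => f x y))
    (hgx : ∀ y ∈ Set.Icc c d, ∀ u ∈ Set.Icc a b, ∀ v ∈ Set.Icc a b,
        ∀ l ∈ Set.Icc (0:ℝ) 1,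
      g (l * u + (1 - l) * v) y ≤ l ^ s * g u y + (1 - l) ^ s * g v y)
    (hgy : ∀ x ∈ Set.Icc a b, ∀ u ∈ Set.Icc c d, ∀ v ∈ Set.Icc c d,
        ∀ l ∈ Set.Icc (0:ℝ) 1,
      g x (l * u + (1 - l) * v) ≤ l ^ s * g x u + (1 - l) ^ s * g x v)
    (hint : IntegrableOn (fun p : ℝ × ℝ => f p.1 p.2 * g p.1 p.2)
      (Set.Icc a b ×ˢ Set.Icc c d) volume) :
    2 ^ (2 * s + 1) * f ((a + b) / 2) ((c + d) / 2) * g ((a + b) / 2) ((c + d) / 2) ≤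
      (2 / ((b - a) * (d - c))) * (∫ x in a..b, ∫ y in c..d, f x y * g x y) +
      ((4 * s + 6) / ((s + 1) ^ 2 * (s + 2) ^ 2)) *
        (f a c * g a c + f b c * g b c + f a d * g a d + f b d * g b d) +
      ((2 * s ^ 2 + 6 * s + 6) / ((s + 1) ^ 2 * (s + 2) ^ 2)) *
        (f a c * g b c + f b c * g a c + f a d * g b d + f b d * g a d +
          f a c * g a d + f b c * g b d + f a d * g a c + f b d * g b c) +
      ((2 * s ^ 2 + 8 * s + 6) / ((s + 1) ^ 2 * (s + 2) ^ 2)) *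
        (f a c * g b d + f b c * g a d + f a d * g b c + f b d * g a c) := by
  obtain ⟨hs0, hs1⟩ := hs
  have hA : (0:ℝ) < b - a := by linarith
  have hCpos : (0:ℝ) < d - c := by linarith
  -- reflected integrability and integral equalities
  have hry := refl_y (c+d) (fun p : ℝ × ℝ => f p.1 p.2 * g p.1 p.2)
    (Set.Icc a b ×ˢ Set.Icc c d) (pre_y a b c d) hint
  have hF2 : IntegrableOn (fun p : ℝ × ℝ => f p.1 (c+d-p.2) * g p.1 (c+d-p.2))
      (Set.Icc a b ×ˢ Set.Icc c d) volume := hry.1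
  have hE2 : ∫ p in Set.Icc a b ×ˢ Set.Icc c d, f p.1 (c+d-p.2) * g p.1 (c+d-p.2)
      = ∫ p in Set.Icc a b ×ˢ Set.Icc c d, f p.1 p.2 * g p.1 p.2 := hry.2
  have hrx := refl_x (a+b) (fun p : ℝ × ℝ => f p.1 p.2 * g p.1 p.2)
    (Set.Icc a b ×ˢ Set.Icc c d) (pre_x a b c d) hint
  have hF3 : IntegrableOn (fun p : ℝ × ℝ => f (a+b-p.1) p.2 * g (a+b-p.1) p.2)
      (Set.Icc a b ×ˢ Set.Icc c d) volume := hrx.1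
  have hE3 : ∫ p in Set.Icc a b ×ˢ Set.Icc c d, f (a+b-p.1) p.2 * g (a+b-p.1) p.2
      = ∫ p in Set.Icc a b ×ˢ Set.Icc c d, f p.1 p.2 * g p.1 p.2 := hrx.2
  have hrxy := refl_x (a+b) (fun p : ℝ × ℝ => f p.1 (c+d-p.2) * g p.1 (c+d-p.2))
    (Set.Icc a b ×ˢ Set.Icc c d) (pre_x a b c d) hF2
  have hF4 : IntegrableOn (fun p : ℝ × ℝ => f (a+b-p.1) (c+d-p.2) * g (a+b-p.1) (c+d-p.2))
      (Set.Icc a b ×ˢ Set.Icc c d) volume := hrxy.1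
  have hE4 : ∫ p in Set.Icc a b ×ˢ Set.Icc c d, f (a+b-p.1) (c+d-p.2) * g (a+b-p.1) (c+d-p.2)
      = ∫ p in Set.Icc a b ×ˢ Set.Icc c d, f p.1 p.2 * g p.1 p.2 := by
    rw [(show (∫ p in Set.Icc a b ×ˢ Set.Icc c d,
        f (a+b-p.1) (c+d-p.2) * g (a+b-p.1) (c+d-p.2))
      = ∫ p in Set.Icc a b ×ˢ Set.Icc c d, f p.1 (c+d-p.2) * g p.1 (c+d-p.2) from hrxy.2), hE2]
  -- integrability of the weight part
  have hcompact : IsCompact (Set.Icc a b ×ˢ Set.Icc c d) := isCompact_Icc.prod isCompact_Icc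
  have hU11 : IntegrableOn (fun p : ℝ × ℝ =>
      ((f a c + f a d + f b c + f b d) * (g a c + g a d + g b c + g b d)
        - (f a c * g a c + f a d * g a d + f b c * g b c + f b d * g b d))
        * (Uali a b s p.1 * Uali c d s p.2)) (Set.Icc a b ×ˢ Set.Icc c d) volume :=
    ((continuous_const.mul (((cont_Uali a b s hs0).comp continuous_fst).mul
      ((cont_Uali c d s hs0).comp continuous_snd))).continuousOn).integrableOn_compact hcompact
  have hU12 : IntegrableOn (fun p : ℝ × ℝ =>
      ((f a c + f a d + f b c + f b d) * (g a c + g a d + g b c + g b d)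
        - (f a c * g a d + f a d * g a c + f b c * g b d + f b d * g b c))
        * (Uali a b s p.1 * Ucro c d s p.2)) (Set.Icc a b ×ˢ Set.Icc c d) volume :=
    ((continuous_const.mul (((cont_Uali a b s hs0).comp continuous_fst).mul
      ((cont_Ucro c d s hs0).comp continuous_snd))).continuousOn).integrableOn_compact hcompact
  have hU21 : IntegrableOn (fun p : ℝ × ℝ =>
      ((f a c + f a d + f b c + f b d) * (g a c + g a d + g b c + g b d)
        - (f a c * g b c + f a d * g b d + f b c * g a c + f b d * g a d))
        * (Ucro a b s p.1 * Uali c d s p.2)) (Set.Icc a b ×ˢ Set.Icc c d) volume :=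
    ((continuous_const.mul (((cont_Ucro a b s hs0).comp continuous_fst).mul
      ((cont_Uali c d s hs0).comp continuous_snd))).continuousOn).integrableOn_compact hcompact
  have hU22 : IntegrableOn (fun p : ℝ × ℝ =>
      ((f a c + f a d + f b c + f b d) * (g a c + g a d + g b c + g b d)
        - (f a c * g b d + f a d * g b c + f b c * g a d + f b d * g a c))
        * (Ucro a b s p.1 * Ucro c d s p.2)) (Set.Icc a b ×ˢ Set.Icc c d) volume :=
    ((continuous_const.mul (((cont_Ucro a b s hs0).comp continuous_fst).mul
      ((cont_Ucro c d s hs0).comp continuous_snd))).continuousOn).integrableOn_compact hcompact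
  -- monotonicity of the set integral
  have hDint : IntegrableOn (fun p : ℝ × ℝ =>
      f p.1 p.2 * g p.1 p.2 + f p.1 (c+d-p.2) * g p.1 (c+d-p.2)
        + f (a+b-p.1) p.2 * g (a+b-p.1) p.2
        + f (a+b-p.1) (c+d-p.2) * g (a+b-p.1) (c+d-p.2))
      (Set.Icc a b ×ˢ Set.Icc c d) volume := ((hint.add hF2).add hF3).add hF4
  have hHint : IntegrableOn (fun p : ℝ × ℝ =>
      ((f a c + f a d + f b c + f b d) * (g a c + g a d + g b c + g b d)
        - (f a c * g a c + f a d * g a d + f b c * g b c + f b d * g b d))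
        * (Uali a b s p.1 * Uali c d s p.2)
      + ((f a c + f a d + f b c + f b d) * (g a c + g a d + g b c + g b d)
        - (f a c * g a d + f a d * g a c + f b c * g b d + f b d * g b c))
        * (Uali a b s p.1 * Ucro c d s p.2)
      + ((f a c + f a d + f b c + f b d) * (g a c + g a d + g b c + g b d)
        - (f a c * g b c + f a d * g b d + f b c * g a c + f b d * g a d))
        * (Ucro a b s p.1 * Uali c d s p.2)
      + ((f a c + f a d + f b c + f b d) * (g a c + g a d + g b c + g b d)
        - (f a c * g b d + f a d * g b c + f b c * g a d + f b d * g a c))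
        * (Ucro a b s p.1 * Ucro c d s p.2)) (Set.Icc a b ×ˢ Set.Icc c d) volume :=
    ((hU11.add hU12).add hU21).add hU22
  have hmeas : MeasurableSet (Set.Icc a b ×ˢ Set.Icc c d) :=
    measurableSet_Icc.prod measurableSet_Icc
  have hconst : IntegrableOn (fun _ : ℝ × ℝ =>
      (2:ℝ)^(2*s+2) * (f ((a+b)/2) ((c+d)/2) * g ((a+b)/2) ((c+d)/2)))
      (Set.Icc a b ×ˢ Set.Icc c d) volume :=
    integrableOn_const hcompact.measure_lt_top.ne
  have hmono := setIntegral_mono_on (μ := volume) hconst (hDint.add hHint) hmeas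
    (by
      rintro ⟨x, y⟩ ⟨hx, hy⟩
      exact pointwise_core a b c d s hab hcd hs0 f g hf0 hg0 hfx hfy hgx hgy x y hx hy)
  -- compute constant integral
  have hvol : (volume (Set.Icc a b ×ˢ Set.Icc c d)).toReal = (b-a)*(d-c) := by
    rw [Measure.volume_eq_prod, Measure.prod_prod, Real.volume_Icc, Real.volume_Icc,
      ← ENNReal.ofReal_mul (by linarith)]
    exact ENNReal.toReal_ofReal (by positivity)
  rw [setIntegral_const, measureReal_def, hvol, smul_eq_mul] at hmono
  simp only [Pi.add_apply] at hmono
  -- split the right-hand side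
  have hD2 : IntegrableOn (fun p : ℝ × ℝ =>
      f p.1 p.2 * g p.1 p.2 + f p.1 (c+d-p.2) * g p.1 (c+d-p.2))
      (Set.Icc a b ×ˢ Set.Icc c d) volume := hint.add hF2
  have hD3 : IntegrableOn (fun p : ℝ × ℝ =>
      f p.1 p.2 * g p.1 p.2 + f p.1 (c+d-p.2) * g p.1 (c+d-p.2)
        + f (a+b-p.1) p.2 * g (a+b-p.1) p.2)
      (Set.Icc a b ×ˢ Set.Icc c d) volume := hD2.add hF3
  have hH2 : IntegrableOn (fun p : ℝ × ℝ =>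
      ((f a c + f a d + f b c + f b d) * (g a c + g a d + g b c + g b d)
        - (f a c * g a c + f a d * g a d + f b c * g b c + f b d * g b d))
        * (Uali a b s p.1 * Uali c d s p.2)
      + ((f a c + f a d + f b c + f b d) * (g a c + g a d + g b c + g b d)
        - (f a c * g a d + f a d * g a c + f b c * g b d + f b d * g b c))
        * (Uali a b s p.1 * Ucro c d s p.2)) (Set.Icc a b ×ˢ Set.Icc c d) volume :=
    hU11.add hU12
  have hH3 : IntegrableOn (fun p : ℝ × ℝ =>
      ((f a c + f a d + f b c + f b d) * (g a c + g a d + g b c + g b d)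
        - (f a c * g a c + f a d * g a d + f b c * g b c + f b d * g b d))
        * (Uali a b s p.1 * Uali c d s p.2)
      + ((f a c + f a d + f b c + f b d) * (g a c + g a d + g b c + g b d)
        - (f a c * g a d + f a d * g a c + f b c * g b d + f b d * g b c))
        * (Uali a b s p.1 * Ucro c d s p.2)
      + ((f a c + f a d + f b c + f b d) * (g a c + g a d + g b c + g b d)
        - (f a c * g b c + f a d * g b d + f b c * g a c + f b d * g a d))
        * (Ucro a b s p.1 * Uali c d s p.2)) (Set.Icc a b ×ˢ Set.Icc c d) volume :=
    hH2.add hU21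
  rw [MeasureTheory.integral_add hDint hHint,
    MeasureTheory.integral_add hD3 hF4,
    MeasureTheory.integral_add hD2 hF3,
    MeasureTheory.integral_add hint hF2,
    MeasureTheory.integral_add hH3 hU22,
    MeasureTheory.integral_add hH2 hU21,
    MeasureTheory.integral_add hU11 hU12] at hmono
  rw [hE2, hE3, hE4] at hmono
  -- evaluate the four weight integrals
  have hprodint : ∀ (U V : ℝ → ℝ) (rU rV : ℝ),
      (∫ x in Set.Icc a b, U x) = rU → (∫ y in Set.Icc c d, V y) = rV →
      ∫ p in Set.Icc a b ×ˢ Set.Icc c d, U p.1 * V p.2 = rU * rV := by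
    intro U V rU rV hU hV
    rw [Measure.volume_eq_prod, setIntegral_prod_mul, ← Measure.volume_eq_prod] at *
    rw [hU, hV]
  have hI11 : ∫ p in Set.Icc a b ×ˢ Set.Icc c d, Uali a b s p.1 * Uali c d s p.2
      = (2*(b-a)/(s+2)) * (2*(d-c)/(s+2)) :=
    hprodint _ _ _ _ (int_Uali a b s hab hs0) (int_Uali c d s hcd hs0)
  have hI12 : ∫ p in Set.Icc a b ×ˢ Set.Icc c d, Uali a b s p.1 * Ucro c d s p.2
      = (2*(b-a)/(s+2)) * (2*(d-c)/((s+1)*(s+2))) :=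
    hprodint _ _ _ _ (int_Uali a b s hab hs0) (int_Ucro c d s hcd hs0)
  have hI21 : ∫ p in Set.Icc a b ×ˢ Set.Icc c d, Ucro a b s p.1 * Uali c d s p.2
      = (2*(b-a)/((s+1)*(s+2))) * (2*(d-c)/(s+2)) :=
    hprodint _ _ _ _ (int_Ucro a b s hab hs0) (int_Uali c d s hcd hs0)
  have hI22 : ∫ p in Set.Icc a b ×ˢ Set.Icc c d, Ucro a b s p.1 * Ucro c d s p.2
      = (2*(b-a)/((s+1)*(s+2))) * (2*(d-c)/((s+1)*(s+2))) :=
    hprodint _ _ _ _ (int_Ucro a b s hab hs0) (int_Ucro c d s hcd hs0)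
  rw [MeasureTheory.integral_const_mul, MeasureTheory.integral_const_mul,
    MeasureTheory.integral_const_mul, MeasureTheory.integral_const_mul,
    hI11, hI12, hI21, hI22] at hmono
  -- identify the main integral with the iterated integral
  have hIiter : ∫ p in Set.Icc a b ×ˢ Set.Icc c d, f p.1 p.2 * g p.1 p.2
      = ∫ x in a..b, ∫ y in c..d, f x y * g x y := by
    have hint' : IntegrableOn (fun p : ℝ × ℝ => f p.1 p.2 * g p.1 p.2)
        (Set.Icc a b ×ˢ Set.Icc c d) (volume.prod volume) := by
      rwa [← Measure.volume_eq_prod]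
    rw [Measure.volume_eq_prod, MeasureTheory.setIntegral_prod _ hint']
    rw [MeasureTheory.integral_Icc_eq_integral_Ioc, ← intervalIntegral.integral_of_le hab.le]
    apply intervalIntegral.integral_congr
    intro x _
    simp only
    rw [MeasureTheory.integral_Icc_eq_integral_Ioc, ← intervalIntegral.integral_of_le hcd.le]
  rw [hIiter] at hmono
  -- final arithmetic
  have hs1ne : s + 1 ≠ 0 := by linarith
  have hs2ne : s + 2 ≠ 0 := by linarith
  have hEH :
      ((f a c + f a d + f b c + f b d) * (g a c + g a d + g b c + g b d)
        - (f a c * g a c + f a d * g a d + f b c * g b c + f b d * g b d))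
        * ((2*(b-a)/(s+2)) * (2*(d-c)/(s+2)))
      + ((f a c + f a d + f b c + f b d) * (g a c + g a d + g b c + g b d)
        - (f a c * g a d + f a d * g a c + f b c * g b d + f b d * g b c))
        * ((2*(b-a)/(s+2)) * (2*(d-c)/((s+1)*(s+2))))
      + ((f a c + f a d + f b c + f b d) * (g a c + g a d + g b c + g b d)
        - (f a c * g b c + f a d * g b d + f b c * g a c + f b d * g a d))
        * ((2*(b-a)/((s+1)*(s+2))) * (2*(d-c)/(s+2)))
      + ((f a c + f a d + f b c + f b d) * (g a c + g a d + g b c + g b d)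
        - (f a c * g b d + f a d * g b c + f b c * g a d + f b d * g a c))
        * ((2*(b-a)/((s+1)*(s+2))) * (2*(d-c)/((s+1)*(s+2))))
      = 2*((b-a)*(d-c)) *
        (((4 * s + 6) / ((s + 1) ^ 2 * (s + 2) ^ 2)) *
          (f a c * g a c + f b c * g b c + f a d * g a d + f b d * g b d) +
        ((2 * s ^ 2 + 6 * s + 6) / ((s + 1) ^ 2 * (s + 2) ^ 2)) *
          (f a c * g b c + f b c * g a c + f a d * g b d + f b d * g a d +
            f a c * g a d + f b c * g b d + f a d * g a c + f b d * g b c) +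
        ((2 * s ^ 2 + 8 * s + 6) / ((s + 1) ^ 2 * (s + 2) ^ 2)) *
          (f a c * g b d + f b c * g a d + f a d * g b c + f b d * g a c)) := by
    field_simp
    ring
  have h2pow : (2:ℝ)^(2*s+2) = 2^(2*s+1) * 2 := by
    rw [show (2*s+2:ℝ) = 2*s+1+1 from by ring,
      Real.rpow_add_one (by norm_num : (2:ℝ) ≠ 0)]
  rw [h2pow] at hmono
  set I : ℝ := ∫ x in a..b, ∫ y in c..d, f x y * g x y with hIdef
  set T : ℝ := ((4 * s + 6) / ((s + 1) ^ 2 * (s + 2) ^ 2)) *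
          (f a c * g a c + f b c * g b c + f a d * g a d + f b d * g b d) +
        ((2 * s ^ 2 + 6 * s + 6) / ((s + 1) ^ 2 * (s + 2) ^ 2)) *
          (f a c * g b c + f b c * g a c + f a d * g b d + f b d * g a d +
            f a c * g a d + f b c * g b d + f a d * g a c + f b d * g b c) +
        ((2 * s ^ 2 + 8 * s + 6) / ((s + 1) ^ 2 * (s + 2) ^ 2)) *
          (f a c * g b d + f b c * g a d + f a d * g b c + f b d * g a c) with hTdef
  have hkey : (b-a)*(d-c) * (2^(2*s+1) * 2
      * (f ((a+b)/2) ((c+d)/2) * g ((a+b)/2) ((c+d)/2)))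
      ≤ 4 * I + 2*((b-a)*(d-c)) * T := by
    rw [hTdef, ← hEH]
    linarith [hmono]
  have hAC : (0:ℝ) < (b-a)*(d-c) := mul_pos hA hCpos
  have e1 : 2/((b-a)*(d-c)) * I + T = (4*I + 2*((b-a)*(d-c))*T) / (2*((b-a)*(d-c))) := by
    field_simp
    ring
  have hfin : 2^(2*s+1) * (f ((a+b)/2) ((c+d)/2) * g ((a+b)/2) ((c+d)/2))
      ≤ 2/((b-a)*(d-c)) * I + T := by
    rw [e1, le_div_iff₀ (by positivity : (0:ℝ) < 2*((b-a)*(d-c)))]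
    linarith [hkey]
  rw [hTdef] at hfin
  linarith [hfin]
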